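/- (Categorical equivalence to vertex-reconstructability) Let V and W be finite types, and let G : SimpleGraph V and H : SimpleGraph W be simple graphs, each with at least 3 vertices. Suppose there is a bijection σ : V → W and, for every vertex v ∈ V, a graph isomorphism γ_v : (G − v) ≅ (H − σ(v)), where G − v denotes the induced subgraph of G on the vertex type {u : V // u ≠ v}. Let D be the disjoint union of the vertex-deleted subgraphs, the simple graph on the vertex type Σ (v : V), {u : V // u ≠ v} whose component indexed by v is G − v, and let Γ : D → H be the graph homomorphism that on the component indexed by v acts as γ_v followed by the inclusion of H − σ(v) into H. Then G is isomorphic to H if and only if there exists a graph homomorphism δ : D → G such that (i) δ is surjective on vertices and every edge of G is the image under δ of some edge of D, and (ii) for all vertices x, y of D, Γ(x) = Γ(y) implies δ(x) = δ(y). -/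

import Mathlib

/-- The disjoint union of the single-edge-deleted subgraphs of `G`: the component
indexed by an edge `e` of `G` is `G` with the edge `e` deleted. -/
def SimpleGraph.edgeDeck {V : Type} (G : SimpleGraph V) :
    SimpleGraph (Σ _e : G.edgeSet, V) where
  Adj x y := x.1 = y.1 ∧ (G.deleteEdges {x.1.1}).Adj x.2 y.2
  symm := by
    constructor
    rintro ⟨e, u⟩ ⟨e', v⟩ ⟨h1, h2⟩
    cases h1
    exact ⟨rfl, h2.symm⟩
  loopless := by
    constructor
    rintro ⟨e, u⟩ ⟨-, h2⟩
    exact (G.deleteEdges {e.1}).loopless.irrefl u h2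

/-- The disjoint union of the single-vertex-deleted subgraphs of `G`: the component
indexed by a vertex `v` of `G` is the induced subgraph of `G` on `{u // u ≠ v}`. -/
def SimpleGraph.vertexDeck {V : Type} (G : SimpleGraph V) :
    SimpleGraph (Σ v : V, {u : V // u ≠ v}) where
  Adj x y := x.1 = y.1 ∧ G.Adj x.2.1 y.2.1
  symm := by
    constructor
    rintro ⟨v, u⟩ ⟨v', u'⟩ ⟨h1, h2⟩
    cases h1
    exact ⟨rfl, h2.symm⟩
  loopless := by
    constructor
    rintro ⟨v, u⟩ ⟨-, h2⟩
    exact G.loopless.irrefl u.1 h2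

/-- **Categorical equivalence to vertex-reconstructability.**  Given finite simple
graphs `G` and `H` with at least 3 vertices, a bijection `σ` of their vertex types
and isomorphisms `γ v : G − v ≅ H − σ v` of the vertex-deleted subgraphs, let `Γ` be
the homomorphism from the disjoint union `D` of the vertex-deleted subgraphs of `G`
to `H` which acts on the component indexed by `v` as `γ v` followed by the inclusion
of `H − σ v` into `H`.  Then `G ≅ H` iff there is a homomorphism `δ : D → G` that is
surjective on vertices and edges and that coequalizes the kernel pair of `Γ`
(i.e. `Γ x = Γ y` implies `δ x = δ y`). -/
theorem vertex_reconstructable_iff {V W : Type} [Fintype V] [Fintype W]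
    (G : SimpleGraph V) (H : SimpleGraph W)
    (hV : 3 ≤ Fintype.card V) (hW : 3 ≤ Fintype.card W)
    (σ : V ≃ W)
    (γ : ∀ v : V, G.induce {u : V | u ≠ v} ≃g H.induce {w : W | w ≠ σ v})
    (Γ : G.vertexDeck →g H)
    (hΓ : ∀ (v : V) (u : {u : V // u ≠ v}), Γ ⟨v, u⟩ = ((γ v) u).1) :
    Nonempty (G ≃g H) ↔
      ∃ δ : G.vertexDeck →g G,
        (Function.Surjective δ ∧
          ∀ e ∈ G.edgeSet, ∃ d ∈ G.vertexDeck.edgeSet, Sym2.map δ d = e) ∧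
        (∀ x y, Γ x = Γ y → δ x = δ y) := by
  classical
  -- avoid two vertices
  have avoid2 : ∀ w w' : W, ∃ v : V, σ v ≠ w ∧ σ v ≠ w' := by
    intro w w'
    have h : ({σ.symm w, σ.symm w'} : Finset V) ≠ Finset.univ := by
      intro heq
      have := Finset.card_insert_le (σ.symm w) ({σ.symm w'} : Finset V)
      rw [heq, Finset.card_univ] at this
      simp only [Finset.card_singleton] at this
      omega
    obtain ⟨v, -, hv⟩ := Finset.exists_of_ssubset (Finset.ssubset_univ_iff.mpr h)
    simp only [Finset.mem_insert, Finset.mem_singleton, not_or] at hv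
    refine ⟨v, fun h => hv.1 (by rw [← h, Equiv.symm_apply_apply]),
              fun h => hv.2 (by rw [← h, Equiv.symm_apply_apply])⟩
  have Γval : ∀ (v : V) (a : {w : W | w ≠ σ v}), Γ ⟨v, (γ v).symm a⟩ = a.1 := by
    intro v a
    rw [hΓ v ((γ v).symm a), RelIso.apply_symm_apply]
  have Γsurj : Function.Surjective Γ := by
    intro w
    obtain ⟨v, hv, -⟩ := avoid2 w w
    exact ⟨⟨v, (γ v).symm ⟨w, hv.symm⟩⟩, Γval v ⟨w, hv.symm⟩⟩
  have Γedge : ∀ {w w' : W}, H.Adj w w' →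
      ∃ x y, G.vertexDeck.Adj x y ∧ Γ x = w ∧ Γ y = w' := by
    intro w w' hww
    obtain ⟨v, hv1, hv2⟩ := avoid2 w w'
    set a : {x : W | x ≠ σ v} := ⟨w, hv1.symm⟩
    set b : {x : W | x ≠ σ v} := ⟨w', hv2.symm⟩
    have hab : (H.induce {x : W | x ≠ σ v}).Adj a b := hww
    have hgab : (G.induce {u : V | u ≠ v}).Adj ((γ v).symm a) ((γ v).symm b) :=
      (γ v).symm.map_adj_iff.mpr hab
    exact ⟨⟨v, (γ v).symm a⟩, ⟨v, (γ v).symm b⟩, ⟨rfl, hgab⟩, Γval v a, Γval v b⟩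
  constructor
  · rintro ⟨φ⟩
    refine ⟨φ.symm.toHom.comp Γ, ⟨?_, ?_⟩, ?_⟩
    · intro a
      obtain ⟨x, hx⟩ := Γsurj (φ a)
      refine ⟨x, ?_⟩
      show φ.symm (Γ x) = a
      rw [hx, RelIso.symm_apply_apply]
    · intro e he
      induction e with
      | _ u u' =>
        rw [SimpleGraph.mem_edgeSet] at he
        obtain ⟨x, y, hxy, hx, hy⟩ := Γedge (φ.map_adj_iff.mpr he)
        refine ⟨s(x, y), hxy, ?_⟩
        show s(φ.symm (Γ x), φ.symm (Γ y)) = s(u, u')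
        rw [hx, hy, RelIso.symm_apply_apply, RelIso.symm_apply_apply]
    · intro x y h
      show φ.symm (Γ x) = φ.symm (Γ y)
      rw [h]
  · rintro ⟨δ, ⟨hsurj, hedge⟩, hker⟩
    -- define f : W → V
    choose g hg using Γsurj
    set f : W → V := fun w => δ (g w) with hf
    have hfΓ : ∀ x, f (Γ x) = δ x := fun x => hker _ _ (hg (Γ x))
    have hfsurj : Function.Surjective f := by
      intro a
      obtain ⟨x, hx⟩ := hsurj a
      exact ⟨Γ x, by rw [hfΓ, hx]⟩
    have hfbij : Function.Bijective f :=
      (Fintype.bijective_iff_surjective_and_card f).mpr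
        ⟨hfsurj, (Fintype.card_congr σ).symm⟩
    have fhom : ∀ {w w'}, H.Adj w w' → G.Adj (f w) (f w') := by
      intro w w' hww
      obtain ⟨x, y, hxy, hx, hy⟩ := Γedge hww
      rw [← hx, ← hy, hfΓ, hfΓ]
      exact δ.map_adj hxy
    have fedge : ∀ {u u' : V}, G.Adj u u' → ∃ w w', H.Adj w w' ∧ f w = u ∧ f w' = u' := by
      intro u u' huu
      obtain ⟨d, hd, hmap⟩ := hedge s(u, u') huu
      induction d with
      | _ x y =>
        rw [SimpleGraph.mem_edgeSet] at hd
        have h1 : H.Adj (Γ x) (Γ y) := Γ.map_adj hd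
        have h2 : s(f (Γ x), f (Γ y)) = s(u, u') := by
          rw [hfΓ, hfΓ]; exact hmap
        rw [Sym2.eq_iff] at h2
        rcases h2 with ⟨h3, h4⟩ | ⟨h3, h4⟩
        · exact ⟨Γ x, Γ y, h1, h3, h4⟩
        · exact ⟨Γ y, Γ x, h1.symm, h4, h3⟩
    have key : ∀ w w', G.Adj (f w) (f w') ↔ H.Adj w w' := by
      intro w w'
      refine ⟨fun h => ?_, fhom⟩
      obtain ⟨a, b, hab, ha, hb⟩ := fedge h
      have : a = w := hfbij.1 (by rw [ha])
      have hb' : b = w' := hfbij.1 (by rw [hb])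
      rwa [this, hb'] at hab
    exact ⟨(RelIso.mk (Equiv.ofBijective f hfbij) (key _ _)).symm⟩
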